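/- Let α > 1, ε ≥ 0, and let M be a mechanism from D^n to probability distributions on R satisfying the single-step Rényi-DP consequence: for every pair of neighboring datasets d̃, d̃' and every event E ⊆ R, Pr[M(d̃) ∈ E] ≤ e^{ε(1−1/α)}·(Pr[M(d̃') ∈ E])^{1−1/α}. Let d, d' be datasets with Hamming distance |d−d'|_H = Δ and suppose α ≥ Δ+1. If E ⊆ R is an event with Pr[M(d) ∈ E] ≥ 1/4, then Pr[M(d') ∈ E] ≥ e^{−e(α−1)ε}/44. -/

import Mathlib

open MeasureTheory
open scoped ENNReal

private def Sgeom (c : ℝ) : ℕ → ℝ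
  | 0 => 0
  | (k+1) => c * (1 + Sgeom c k)

private lemma Sgeom_nonneg {c : ℝ} (hc : 0 ≤ c) : ∀ k, 0 ≤ Sgeom c k
  | 0 => le_refl 0
  | (k+1) => by
      have := Sgeom_nonneg hc k
      simp only [Sgeom]; positivity

private lemma Sgeom_le {c : ℝ} (hc0 : 0 ≤ c) (hc1 : c ≤ 1) : ∀ k, Sgeom c k ≤ k
  | 0 => by simp [Sgeom]
  | (k+1) => by
      have ih := Sgeom_le hc0 hc1 k
      have h0 := Sgeom_nonneg hc0 k
      simp only [Sgeom]
      push_cast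
      nlinarith

private lemma hamming_step {n : ℕ} {D : Type*} [DecidableEq D] {d d' : Fin n → D} {Δ : ℕ}
    (h : hammingDist d d' = Δ + 1) :
    ∃ d'', hammingDist d d'' = 1 ∧ hammingDist d'' d' = Δ := by
  have hne : d ≠ d' := by
    intro he; rw [he, hammingDist_self] at h; omega
  obtain ⟨i, hi⟩ := Function.ne_iff.mp hne
  refine ⟨Function.update d i (d' i), ?_, ?_⟩
  · have h1 : (Finset.univ.filter fun j => d j ≠ Function.update d i (d' i) j) = {i} := by
      ext j
      by_cases hj : j = i <;> simp [hj, Function.update, hi]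
    show (Finset.univ.filter fun j => d j ≠ Function.update d i (d' i) j).card = 1
    rw [h1, Finset.card_singleton]
  · have h2 : (Finset.univ.filter fun j => Function.update d i (d' i) j ≠ d' j)
        = (Finset.univ.filter fun j => d j ≠ d' j).erase i := by
      ext j
      by_cases hj : j = i <;> simp [hj, Function.update]
    have hmem : i ∈ Finset.univ.filter fun j => d j ≠ d' j := by simp [hi]
    show (Finset.univ.filter fun j => Function.update d i (d' i) j ≠ d' j).card = Δ
    rw [h2, Finset.card_erase_of_mem hmem]
    have : (Finset.univ.filter fun j => d j ≠ d' j).card = Δ + 1 := h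
    omega

private lemma four_rpow_le {t : ℝ} (ht0 : 0 ≤ t) (hte : t ≤ Real.exp 1) : (4:ℝ) ^ t ≤ 44 := by
  have h4 : (4:ℝ) ^ t ≤ (4:ℝ) ^ (Real.exp 1) :=
    Real.rpow_le_rpow_of_exponent_le (by norm_num) hte
  refine h4.trans ?_
  have hlog4 : Real.log 4 = 2 * Real.log 2 := by
    rw [show (4:ℝ) = 2^2 by norm_num, Real.log_pow]; push_cast; ring
  have hrw : (4:ℝ) ^ (Real.exp 1) = Real.exp (Real.exp 1 * (2 * Real.log 2)) := by
    rw [Real.rpow_def_of_pos (by norm_num), hlog4]; ring_nf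
  rw [hrw]
  have he : Real.exp 1 < 2.7182818286 := Real.exp_one_lt_d9
  have hl : Real.log 2 < 0.6931471808 := Real.log_two_lt_d9
  have he0 : (0:ℝ) < Real.exp 1 := Real.exp_pos 1
  have hl0 : (0:ℝ) < Real.log 2 := Real.log_pos (by norm_num)
  have harg : Real.exp 1 * (2 * Real.log 2) ≤ 3.768433 := by nlinarith
  have hmono : Real.exp (Real.exp 1 * (2 * Real.log 2)) ≤ Real.exp 3.768433 :=
    Real.exp_le_exp.mpr harg
  refine hmono.trans ?_
  have hsplit : Real.exp (3.768433:ℝ) = Real.exp 1 ^ 3 * Real.exp 0.768433 := by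
    rw [← Real.exp_nat_mul, ← Real.exp_add]; norm_num
  rw [hsplit]
  have hb : Real.exp (0.768433:ℝ) ≤ 2.1575 := by
    have h := Real.exp_bound' (x := 0.768433) (by norm_num) (by norm_num) (n := 4) (by norm_num)
    norm_num [Finset.sum_range_succ, Nat.factorial] at h
    linarith
  have h13 : Real.exp 1 ^ 3 ≤ 2.7182818286 ^ 3 := by
    apply pow_le_pow_left₀ he0.le he.le
  nlinarith [Real.exp_pos (0.768433:ℝ), he0]

/-- group privacy for Rényi DP, Proposition 2.4, third part.
Under the single-step Rényi-DP consequence, for datasets at Hamming distance `Δ` with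
`α ≥ Δ + 1`, if `Pr[M(d) ∈ E] ≥ 1/4` then `Pr[M(d') ∈ E] ≥ e^{-e(α-1)ε}/44`. -/
theorem stmt_5 {D R : Type*} [DecidableEq D] [MeasurableSpace R] {n : ℕ}
    (M : (Fin n → D) → Measure R)
    (hprob : ∀ d, IsProbabilityMeasure (M d))
    (α ε : ℝ) (hα : 1 < α) (hε : 0 ≤ ε)
    (hRDP : ∀ d d' : Fin n → D, hammingDist d d' = 1 →
      ∀ E : Set R, M d E ≤ ENNReal.ofReal (Real.exp (ε * (1 - 1/α))) * (M d' E) ^ (1 - 1/α))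
    (Δ : ℕ) (d d' : Fin n → D) (hdist : hammingDist d d' = Δ)
    (hαΔ : (Δ : ℝ) + 1 ≤ α) :
    ∀ E : Set R, (1 : ℝ≥0∞) / 4 ≤ M d E →
      ENNReal.ofReal (Real.exp (-(Real.exp 1 * (α - 1) * ε)) / 44) ≤ M d' E := by
  intro E hE
  set c : ℝ := 1 - 1/α with hc_def
  have hα0 : (0:ℝ) < α := lt_trans one_pos hα
  have hc0 : 0 < c := by
    have : 1/α < 1 := by rw [div_lt_one hα0]; exact hα
    simp only [hc_def]; linarith
  have hc1 : c < 1 := by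
    have : 0 < 1/α := by positivity
    simp only [hc_def]; linarith
  -- chain lemma
  have chain : ∀ (k : ℕ) (a b : Fin n → D), hammingDist a b = k → ∀ F : Set R,
      M a F ≤ ENNReal.ofReal (Real.exp (ε * Sgeom c k)) * (M b F) ^ (c ^ k) := by
    intro k
    induction k with
    | zero =>
      intro a b hab F
      have : a = b := hammingDist_eq_zero.mp hab
      subst this
      simp [Sgeom, ENNReal.rpow_one]
    | succ k ih =>
      intro a b hab F
      obtain ⟨m, hm1, hm2⟩ := hamming_step hab
      have h1 := hRDP a m hm1 F
      have h2 := ih m b hm2 F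
      calc M a F ≤ ENNReal.ofReal (Real.exp (ε * c)) * (M m F) ^ c := h1
        _ ≤ ENNReal.ofReal (Real.exp (ε * c)) *
            (ENNReal.ofReal (Real.exp (ε * Sgeom c k)) * (M b F) ^ (c ^ k)) ^ c :=
          mul_le_mul' le_rfl (ENNReal.rpow_le_rpow h2 hc0.le)
        _ = ENNReal.ofReal (Real.exp (ε * Sgeom c (k+1))) * (M b F) ^ (c ^ (k+1)) := by
          rw [ENNReal.mul_rpow_of_nonneg _ _ hc0.le,
            ENNReal.ofReal_rpow_of_pos (Real.exp_pos _), ← Real.exp_mul,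
            ← ENNReal.rpow_mul, ← mul_assoc, ← ENNReal.ofReal_mul (Real.exp_pos _).le,
            ← Real.exp_add]
          have e1 : ε * c + ε * Sgeom c k * c = ε * Sgeom c (k+1) := by
            simp only [Sgeom]; ring
          have e2 : c ^ k * c = c ^ (k+1) := by ring
          rw [e1, e2]
  have hchain := chain Δ d d' hdist E
  -- pass to reals
  have hfin : M d' E ≤ 1 := prob_le_one
  set p : ℝ≥0∞ := M d' E with hp_def
  have hpne : p ≠ ⊤ := (hfin.trans_lt ENNReal.one_lt_top).ne
  set q : ℝ := p.toReal with hq_def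
  have hq0 : 0 ≤ q := ENNReal.toReal_nonneg
  set r : ℝ := c ^ Δ with hr_def
  have hr0 : 0 < r := pow_pos hc0 Δ
  have hRHSne : ENNReal.ofReal (Real.exp (ε * Sgeom c Δ)) * p ^ r ≠ ⊤ := by
    apply ENNReal.mul_ne_top ENNReal.ofReal_ne_top
    exact (ENNReal.rpow_lt_top_of_nonneg hr0.le hpne).ne
  have hreal : (1:ℝ)/4 ≤ Real.exp (ε * Sgeom c Δ) * q ^ r := by
    have h14 : ((1:ℝ≥0∞)/4).toReal = (1:ℝ)/4 := by norm_num
    have := ENNReal.toReal_mono hRHSne (hE.trans hchain)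
    rw [h14, ENNReal.toReal_mul, ENNReal.toReal_ofReal (Real.exp_pos _).le,
      ← ENNReal.toReal_rpow] at this
    exact this
  have hS0 : 0 ≤ Sgeom c Δ := Sgeom_nonneg hc0.le Δ
  have hSΔ : Sgeom c Δ ≤ Δ := Sgeom_le hc0.le hc1.le Δ
  have hexp0 : (0:ℝ) < Real.exp (ε * Sgeom c Δ) := Real.exp_pos _
  have hqr : Real.exp (-(ε * Sgeom c Δ)) / 4 ≤ q ^ r := by
    have heq : Real.exp (-(ε * Sgeom c Δ)) / 4 = (1/4) / Real.exp (ε * Sgeom c Δ) := by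
      rw [Real.exp_neg]; ring
    rw [heq, div_le_iff₀ hexp0, mul_comm]
    exact hreal
  -- t := r⁻¹ ≤ e
  have ht_le : r⁻¹ ≤ Real.exp 1 := by
    have hα1 : α - 1 ≠ 0 := ne_of_gt (by linarith)
    have hαne : α ≠ 0 := ne_of_gt hα0
    have hcinv : c⁻¹ = 1 + 1/(α-1) := by
      rw [hc_def]
      rw [show (1:ℝ) - 1/α = (α-1)/α by field_simp, inv_div]
      field_simp
      ring
    have h1 : c⁻¹ ≤ Real.exp (1/(α-1)) := by
      rw [hcinv]
      have := Real.add_one_le_exp (1/(α-1))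
      linarith
    have h2 : r⁻¹ = (c⁻¹) ^ Δ := by rw [hr_def, inv_pow]
    have h3 : (c⁻¹)^Δ ≤ (Real.exp (1/(α-1)))^Δ :=
      pow_le_pow_left₀ (by positivity) h1 Δ
    have h4 : (Real.exp (1/(α-1)))^Δ = Real.exp (Δ * (1/(α-1))) := by
      rw [← Real.exp_nat_mul]
    have h5 : Real.exp ((Δ:ℝ) * (1/(α-1))) ≤ Real.exp 1 := by
      apply Real.exp_le_exp.mpr
      rw [mul_one_div, div_le_one (by linarith)]
      linarith
    rw [h2]; exact h3.trans (h4 ▸ h5)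
  have ht0 : 0 < r⁻¹ := by positivity
  -- q ≥ (exp(-εS)/4)^(r⁻¹)
  have hB0 : 0 ≤ Real.exp (-(ε * Sgeom c Δ)) / 4 := by positivity
  have hq_lb : (Real.exp (-(ε * Sgeom c Δ)) / 4) ^ (r⁻¹) ≤ q := by
    have h := Real.rpow_le_rpow hB0 hqr ht0.le
    rwa [← Real.rpow_mul hq0, mul_inv_cancel₀ hr0.ne', Real.rpow_one] at h
  have hfinal : Real.exp (-(Real.exp 1 * (α - 1) * ε)) / 44
      ≤ (Real.exp (-(ε * Sgeom c Δ)) / 4) ^ (r⁻¹) := by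
    rw [Real.div_rpow (Real.exp_pos _).le (by norm_num : (0:ℝ) ≤ 4), ← Real.exp_mul]
    have h4r : (4:ℝ) ^ (r⁻¹) ≤ 44 := four_rpow_le ht0.le ht_le
    have h4r0 : (0:ℝ) < (4:ℝ) ^ (r⁻¹) := Real.rpow_pos_of_pos (by norm_num) _
    have hnum : Real.exp (-(Real.exp 1 * (α - 1) * ε)) ≤ Real.exp (-(ε * Sgeom c Δ) * r⁻¹) := by
      apply Real.exp_le_exp.mpr
      have hSr : Sgeom c Δ * r⁻¹ ≤ (α - 1) * Real.exp 1 := by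
        have h1 : Sgeom c Δ * r⁻¹ ≤ (Δ:ℝ) * Real.exp 1 := by
          apply mul_le_mul hSΔ ht_le ht0.le (Nat.cast_nonneg _)
        have h2 : (Δ:ℝ) ≤ α - 1 := by linarith
        have he0 : (0:ℝ) < Real.exp 1 := Real.exp_pos 1
        nlinarith
      nlinarith
    exact div_le_div₀ (Real.exp_pos _).le hnum h4r0 h4r
  have hgoal : Real.exp (-(Real.exp 1 * (α - 1) * ε)) / 44 ≤ q := hfinal.trans hq_lb
  calc ENNReal.ofReal (Real.exp (-(Real.exp 1 * (α - 1) * ε)) / 44)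
      ≤ ENNReal.ofReal q := ENNReal.ofReal_le_ofReal hgoal
    _ = p := ENNReal.ofReal_toReal hpne
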